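/- Let K be a bounded self-adjoint operator on a complex separable Hilbert space k and let ω be a faithful normal state on B(k) invariant for the automorphism group α_t(a) = e^{itK} a e^{−itK}, i.e. e^{−itK} ω e^{itK} = ω for all t. Then K has pure point spectrum: there is an orthonormal basis of k consisting of eigenvectors of K. -/

import Mathlib

open ContinuousLinearMap Filter Topology NormedSpace Pointwise

noncomputable section AuxPurePoint

variable {k : Type} [NormedAddCommGroup k] [InnerProductSpace ℂ k] [CompleteSpace k]

local notation "⟪" x ", " y "⟫" => @inner ℂ _ _ x y

lemma comm_of_invariant (K ω : k →L[ℂ] k)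
    (hinv : ∀ t : ℝ,
      NormedSpace.exp ((-(Complex.I * t)) • K) * ω *
        NormedSpace.exp ((Complex.I * t) • K) = ω) :
    K * ω = ω * K := by
  set A : k →L[ℂ] k := Complex.I • K with hA
  have hsm : ∀ t : ℝ, (Complex.I * (t : ℂ)) • K = t • A := by
    intro t
    rw [mul_comm, mul_smul, hA, Complex.coe_smul]
  have h1 : ∀ t : ℝ, exp (t • A) * ω = ω * exp (t • A) := by
    intro t
    have h0 := hinv t
    rw [neg_smul, hsm t] at h0
    have hE : exp (t • A) * exp (-(t • A)) = 1 := by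
      rw [← exp_add_of_commute_of_mem_ball (𝕂 := ℝ) ((Commute.refl (t • A)).neg_right)
        ((expSeries_radius_eq_top ℝ (k →L[ℂ] k)).symm ▸ edist_lt_top _ _)
        ((expSeries_radius_eq_top ℝ (k →L[ℂ] k)).symm ▸ edist_lt_top _ _), add_neg_cancel, exp_zero]
    calc exp (t • A) * ω
        = exp (t • A) * (exp (-(t • A)) * ω * exp (t • A)) := by rw [h0]
      _ = (exp (t • A) * exp (-(t • A))) * ω * exp (t • A) := by rw [mul_assoc, mul_assoc, mul_assoc]
      _ = ω * exp (t • A) := by rw [hE, one_mul]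
  have hderivA : HasDerivAt (fun t : ℝ => exp (t • A)) A 0 := by
    have h := hasDerivAt_exp_smul_const (𝕂 := ℝ) A (0 : ℝ)
    simpa using h
  have hF : HasDerivAt (fun t : ℝ => ω * exp (t • A)) (ω * A) 0 := hderivA.const_mul ω
  have hG : HasDerivAt (fun t : ℝ => exp (t • A) * ω) (A * ω) 0 := hderivA.mul_const ω
  have heq : (fun t : ℝ => exp (t • A) * ω) = (fun t : ℝ => ω * exp (t • A)) :=
    funext h1
  rw [heq] at hG
  have hAω : A * ω = ω * A := hG.unique hF
  have : Complex.I • (K * ω) = Complex.I • (ω * K) := by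
    rw [← smul_mul_assoc, ← mul_smul_comm, hAω]
  exact smul_right_injective _ Complex.I_ne_zero this

lemma aux_cs (T : k →L[ℂ] k) (hT : T.IsPositive) (x y : k) :
    (⟪T x, y⟫.re) ^ 2 ≤ ⟪T x, x⟫.re * ⟪T y, y⟫.re := by
  have hsym : ∀ u v : k, ⟪T u, v⟫ = ⟪u, T v⟫ := fun u v => hT.isSelfAdjoint.isSymmetric u v
  have hre : ⟪T y, x⟫.re = ⟪T x, y⟫.re := by
    have : ⟪T y, x⟫ = starRingEnd ℂ ⟪T x, y⟫ := by
      rw [hsym x y, inner_conj_symm]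
    rw [this, Complex.conj_re]
  have key : ∀ t : ℝ, 0 ≤ ⟪T y, y⟫.re * (t * t) + (2 * ⟪T x, y⟫.re) * t + ⟪T x, x⟫.re := by
    intro t
    have h0 : 0 ≤ ⟪T (x + (t : ℂ) • y), x + (t : ℂ) • y⟫.re := by
      have := hT.2 (x + (t : ℂ) • y)
      rwa [reApplyInnerSelf_apply] at this
    have hexp : ⟪T (x + (t : ℂ) • y), x + (t : ℂ) • y⟫
        = ⟪T x, x⟫ + (t : ℂ) * ⟪T x, y⟫ + ((t : ℂ) * ⟪T y, x⟫ + (t : ℂ) * ((t : ℂ) * ⟪T y, y⟫)) := by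
      rw [map_add, map_smul, inner_add_left, inner_add_right, inner_add_right,
        inner_smul_left, inner_smul_right, inner_smul_left, inner_smul_right,
        Complex.conj_ofReal]
    rw [hexp] at h0
    simp only [Complex.add_re, Complex.mul_re, Complex.ofReal_re, Complex.ofReal_im,
      zero_mul, sub_zero] at h0
    rw [hre] at h0
    nlinarith [h0]
  have hd := discrim_le_zero key
  rw [discrim] at hd
  nlinarith [hd]

lemma aux_pos_inner (T : k →L[ℂ] k) (hT : T.IsPositive) (hker : LinearMap.ker (T : k →ₗ[ℂ] k) = ⊥)
    {v : k} (hv : v ≠ 0) : 0 < ⟪T v, v⟫.re := by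
  rcases (hT.2 v).lt_or_eq with h | h
  · rwa [reApplyInnerSelf_apply] at h
  · exfalso
    have h' : ⟪T v, v⟫.re = 0 := by
      have := h.symm
      rwa [reApplyInnerSelf_apply] at this
    have hcs := aux_cs T hT v (T v)
    have h1 : ⟪T v, T v⟫.re = ‖T v‖ ^ 2 := by
      simpa using inner_self_eq_norm_sq (𝕜 := ℂ) (T v)
    have h2 : 0 ≤ ⟪T (T v), T v⟫.re := by
      have := hT.2 (T v); rwa [reApplyInnerSelf_apply] at this
    rw [h1, h', zero_mul] at hcs
    have h4 : (‖T v‖ ^ 2) ^ 2 = 0 := le_antisymm hcs (by positivity)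
    have hn : ‖T v‖ = 0 := by
      have := pow_eq_zero_iff (n := 2) (by norm_num) |>.mp h4
      exact pow_eq_zero_iff (n := 2) (by norm_num) |>.mp this
    have hTv : T v = 0 := norm_eq_zero.mp hn
    have hmem : v ∈ LinearMap.ker (T : k →ₗ[ℂ] k) := LinearMap.mem_ker.mpr hTv
    rw [hker] at hmem
    exact hv ((Submodule.mem_bot ℂ).mp hmem)

lemma findim_eigenspace (T : k →L[ℂ] k) (hcpt : IsCompactOperator ⇑T) (μ : ℂ) (hμ : μ ≠ 0) :
    FiniteDimensional ℂ (Module.End.eigenspace (T : k →ₗ[ℂ] k) μ) := by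
  set E := Module.End.eigenspace (T : k →ₗ[ℂ] k) μ with hE
  have hf : IsCompactOperator ⇑(T : k →ₗ[ℂ] k) := hcpt
  obtain ⟨C, hCcpt, hCsub⟩ := hf.image_closedBall_subset_compact 1
  have hclosed : IsClosed (E : Set k) := by
    have hker : (E : Set k) = (LinearMap.ker ((T - μ • (1 : k →L[ℂ] k) : k →L[ℂ] k) : k →ₗ[ℂ] k) : Set k) := by
      ext x
      simp only [SetLike.mem_coe, hE, Module.End.mem_eigenspace_iff, LinearMap.mem_ker,
        ContinuousLinearMap.sub_apply, ContinuousLinearMap.smul_apply,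
        ContinuousLinearMap.one_apply, sub_eq_zero, ContinuousLinearMap.coe_coe]
    rw [hker]
    exact ContinuousLinearMap.isClosed_ker _
  have himg : (Subtype.val '' (Metric.closedBall (0 : ↥E) 1)) =
      (E : Set k) ∩ Metric.closedBall (0 : k) 1 := by
    ext x
    constructor
    · rintro ⟨⟨y, hy⟩, hball, rfl⟩
      refine ⟨hy, ?_⟩
      rw [Metric.mem_closedBall, dist_zero_right] at hball ⊢
      exact hball
    · rintro ⟨hxE, hball⟩
      refine ⟨⟨x, hxE⟩, ?_, rfl⟩
      rw [Metric.mem_closedBall, dist_zero_right] at hball ⊢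
      exact hball
  have hsub : (E : Set k) ∩ Metric.closedBall (0 : k) 1 ⊆ μ⁻¹ • C := by
    rintro x ⟨hxE, hball⟩
    have hTx : (T : k →ₗ[ℂ] k) x = μ • x := Module.End.mem_eigenspace_iff.mp hxE
    refine Set.mem_smul_set.mpr ⟨T x, hCsub ⟨x, hball, rfl⟩, ?_⟩
    have : T x = μ • x := hTx
    rw [this, smul_smul, inv_mul_cancel₀ hμ, one_smul]
  have hcpt2 : IsCompact ((E : Set k) ∩ Metric.closedBall (0 : k) 1) := by
    refine IsCompact.of_isClosed_subset (hCcpt.smul μ⁻¹) ?_ hsub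
    exact hclosed.inter Metric.isClosed_closedBall
  have hcb : IsCompact (Metric.closedBall (0 : ↥E) 1) := by
    rw [Topology.IsEmbedding.subtypeVal.isCompact_iff, himg]
    exact hcpt2
  exact FiniteDimensional.of_isCompact_closedBall₀ ℂ zero_lt_one hcb

lemma exists_eigenvector (T : k →L[ℂ] k) (hT : T.IsPositive)
    (hcpt : IsCompactOperator ⇑T) (V : Submodule ℂ k) (hVc : IsClosed (V : Set k))
    (hVinv : ∀ v ∈ V, T v ∈ V) {x₀ : k} (hx₀V : x₀ ∈ V) (hx₀n : ‖x₀‖ = 1)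
    (hx₀pos : 0 < ⟪T x₀, x₀⟫.re) :
    ∃ (x : k) (M : ℝ), x ∈ V ∧ ‖x‖ = 1 ∧ 0 < M ∧ T x = (M : ℂ) • x := by
  set s : Set ℝ := (fun z => ⟪T z, z⟫.re) '' {z | z ∈ V ∧ ‖z‖ = 1} with hs
  have hne : s.Nonempty := ⟨_, ⟨x₀, ⟨hx₀V, hx₀n⟩, rfl⟩⟩
  have hbdd : BddAbove s := by
    refine ⟨‖T‖, ?_⟩
    rintro y ⟨z, ⟨hzV, hzn⟩, rfl⟩
    calc (⟪T z, z⟫.re : ℝ) ≤ ‖⟪T z, z⟫‖ := Complex.re_le_norm _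
      _ ≤ ‖T z‖ * ‖z‖ := norm_inner_le_norm _ _
      _ ≤ (‖T‖ * ‖z‖) * ‖z‖ := by
          have := T.le_opNorm z
          nlinarith [norm_nonneg z]
      _ = ‖T‖ := by rw [hzn]; ring
  set M : ℝ := sSup s with hMdef
  have hM0 : 0 < M := lt_of_lt_of_le hx₀pos (le_csSup hbdd ⟨x₀, ⟨hx₀V, hx₀n⟩, rfl⟩)
  have hub : ∀ z, z ∈ V → ‖z‖ = 1 → ⟪T z, z⟫.re ≤ M :=
    fun z hz hn => le_csSup hbdd ⟨z, ⟨hz, hn⟩, rfl⟩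
  have hnn : ∀ z : k, 0 ≤ ⟪T z, z⟫.re := by
    intro z; have := hT.2 z; rwa [reApplyInnerSelf_apply] at this
  have hub' : ∀ v ∈ V, ⟪T v, v⟫.re ≤ M * ‖v‖ ^ 2 := by
    intro v hv
    rcases eq_or_ne v 0 with rfl | hv0
    · simp
    · have hn : (0:ℝ) < ‖v‖ := norm_pos_iff.mpr hv0
      set c : ℝ := ‖v‖⁻¹ with hc
      have h1 : ((c : ℂ) • v) ∈ V := V.smul_mem _ hv
      have h2 : ‖(c : ℂ) • v‖ = 1 := by
        rw [norm_smul, Complex.norm_real, Real.norm_eq_abs, abs_of_pos (by positivity)]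
        rw [hc, inv_mul_cancel₀ hn.ne']
      have h3 := hub _ h1 h2
      rw [map_smul, inner_smul_left, inner_smul_right, Complex.conj_ofReal] at h3
      have h4 : (((c:ℂ)) * ((c:ℂ) * ⟪T v, v⟫)).re = c^2 * ⟪T v, v⟫.re := by
        simp [Complex.mul_re, Complex.ofReal_re, Complex.ofReal_im]
        ring
      rw [h4] at h3
      have hc2 : c ^ 2 * ‖v‖^2 = 1 := by rw [hc]; field_simp
      nlinarith [mul_le_mul_of_nonneg_right h3 (sq_nonneg ‖v‖), hc2, hnn v]
  have hTb : ∀ z, z ∈ V → ‖z‖ = 1 → ‖T z‖ ^ 2 ≤ M * ⟪T z, z⟫.re := by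
    intro z hz hzn
    rcases eq_or_ne (T z) 0 with h | h
    · rw [h]; simp
    · have hcs := aux_cs T hT z (T z)
      have h1 : ⟪T z, T z⟫.re = ‖T z‖ ^ 2 := by
        simpa using inner_self_eq_norm_sq (𝕜 := ℂ) (T z)
      have h2 : ⟪T (T z), T z⟫.re ≤ M * ‖T z‖ ^ 2 := hub' _ (hVinv z hz)
      have h3 : (0:ℝ) < ‖T z‖ := norm_pos_iff.mpr h
      have h4 := hnn z
      have h5 : ⟪T z, z⟫.re * ⟪T (T z), T z⟫.re ≤ ⟪T z, z⟫.re * (M * ‖T z‖ ^ 2) :=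
        mul_le_mul_of_nonneg_left h2 h4
      rw [h1] at hcs
      nlinarith [hcs, h5, mul_pos h3 h3]
  -- approximating sequence
  have hseq : ∀ n : ℕ, ∃ z, z ∈ V ∧ ‖z‖ = 1 ∧ M - 1/(n+1) < ⟪T z, z⟫.re := by
    intro n
    obtain ⟨y, hy, hlt⟩ := exists_lt_of_lt_csSup hne
      (sub_lt_self M (by positivity : (0:ℝ) < 1/(n+1)))
    obtain ⟨z, ⟨hz1, hz2⟩, rfl⟩ := hy
    exact ⟨z, hz1, hz2, hlt⟩
  choose u huV hun hulow using hseq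
  have htend : Tendsto (fun n : ℕ => ⟪T (u n), u n⟫.re) atTop (𝓝 M) := by
    refine tendsto_of_tendsto_of_tendsto_of_le_of_le
      (g := fun n : ℕ => M - 1/(n+1)) (h := fun _ : ℕ => M) ?_ tendsto_const_nhds
      (fun n => (hulow n).le) (fun n => hub _ (huV n) (hun n))
    have h0 : Tendsto (fun n : ℕ => 1/((n:ℝ)+1)) atTop (𝓝 0) :=
      tendsto_one_div_add_atTop_nhds_zero_nat
    have := (tendsto_const_nhds : Tendsto (fun _ : ℕ => M) atTop (𝓝 M)).sub h0
    simpa using this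
  have hsq : Tendsto (fun n : ℕ => ‖T (u n) - (M:ℂ) • u n‖ ^ 2) atTop (𝓝 0) := by
    have hb : ∀ n, ‖T (u n) - (M:ℂ) • u n‖ ^ 2 ≤ M * (M - ⟪T (u n), u n⟫.re) := by
      intro n
      have hexp := norm_sub_sq (𝕜 := ℂ) (T (u n)) ((M:ℂ) • u n)
      have hip : (RCLike.re ⟪T (u n), (M:ℂ) • u n⟫ : ℝ) = M * ⟪T (u n), u n⟫.re := by
        rw [inner_smul_right]
        simp [Complex.mul_re]
      have hnsm : ‖(M:ℂ) • u n‖ ^ 2 = M ^ 2 := by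
        rw [norm_smul, Complex.norm_real, Real.norm_eq_abs, hun n, mul_one, sq_abs]
      rw [hip, hnsm] at hexp
      have hTn : ‖T (u n)‖ ^ 2 ≤ M * ⟪T (u n), u n⟫.re := hTb _ (huV n) (hun n)
      rw [hexp]; nlinarith [hTn]
    have h0 : Tendsto (fun n : ℕ => M * (M - ⟪T (u n), u n⟫.re)) atTop (𝓝 0) := by
      have := (htend.const_sub M).const_mul M
      simpa using this
    exact tendsto_of_tendsto_of_tendsto_of_le_of_le tendsto_const_nhds h0
      (fun n => by positivity) hb
  have hdiff : Tendsto (fun n : ℕ => T (u n) - (M:ℂ) • u n) atTop (𝓝 0) := by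
    rw [tendsto_zero_iff_norm_tendsto_zero]
    have := hsq.sqrt
    simpa [Real.sqrt_sq (norm_nonneg _)] using this
  -- compactness
  have hf : IsCompactOperator ⇑(T : k →ₗ[ℂ] k) := by
    have : ⇑(T : k →ₗ[ℂ] k) = ⇑T := rfl
    rw [this]; exact hcpt
  obtain ⟨C, hCcpt, hCsub⟩ := hf.image_closedBall_subset_compact 2
  have hmem : ∀ n : ℕ, T (u n) ∈ C := by
    intro n
    exact hCsub ⟨u n, by rw [Metric.mem_closedBall, dist_zero_right, hun n]; norm_num, rfl⟩
  obtain ⟨y, _, φ, hφ, hty⟩ := hCcpt.tendsto_subseq hmem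
  have hd2 : Tendsto (fun n : ℕ => T (u (φ n)) - (M:ℂ) • u (φ n)) atTop (𝓝 0) :=
    hdiff.comp hφ.tendsto_atTop
  have hMy : Tendsto (fun n : ℕ => (M:ℂ) • u (φ n)) atTop (𝓝 y) := by
    have := hty.sub hd2
    simpa using this
  have hMne : (M:ℂ) ≠ 0 := by exact_mod_cast hM0.ne'
  set x : k := (M:ℂ)⁻¹ • y with hx
  have hux : Tendsto (fun n : ℕ => u (φ n)) atTop (𝓝 x) := by
    have := hMy.const_smul ((M:ℂ)⁻¹)
    simpa [← Complex.coe_smul, smul_smul, inv_mul_cancel₀ hMne] using this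
  have hxV : x ∈ V := hVc.mem_of_tendsto hux (Eventually.of_forall fun n => huV (φ n))
  have hxn : ‖x‖ = 1 := by
    have h1 : Tendsto (fun n : ℕ => ‖u (φ n)‖) atTop (𝓝 ‖x‖) := hux.norm
    have h2 : Tendsto (fun n : ℕ => ‖u (φ n)‖) atTop (𝓝 1) := by
      simpa [hun] using (tendsto_const_nhds : Tendsto (fun _ : ℕ => (1:ℝ)) atTop (𝓝 1))
    exact tendsto_nhds_unique h1 h2
  have hTx : T x = y := by
    have h1 : Tendsto (fun n : ℕ => T (u (φ n))) atTop (𝓝 (T x)) :=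
      (T.continuous.tendsto x).comp hux
    exact tendsto_nhds_unique h1 hty
  have hyx : y = (M:ℂ) • x := by
    rw [hx, smul_smul, mul_inv_cancel₀ hMne, one_smul]
  exact ⟨x, M, hxV, hxn, hM0, by rw [hTx, hyx]⟩


end AuxPurePoint

/-- if `K` is a bounded self-adjoint operator on a complex
separable Hilbert space and `ω` is (the density of) a faithful normal state
invariant under the automorphism group `a ↦ e^{itK} a e^{−itK}`, i.e.
`e^{−itK} ω e^{itK} = ω` for all `t`, then `K` has pure point spectrum:
there is an orthonormal (Hilbert) basis of eigenvectors of `K`. -/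
theorem pure_point_spectrum_of_invariant_faithful_state
    {k : Type} [NormedAddCommGroup k] [InnerProductSpace ℂ k] [CompleteSpace k]
    [TopologicalSpace.SeparableSpace k]
    (K ω : k →L[ℂ] k) (hK : IsSelfAdjoint K)
    -- `ω` is the density of a faithful normal state: positive, compact
    -- (trace-class), with trivial kernel
    (hωpos : ω.IsPositive)
    (hωcompact : IsCompactOperator (⇑ω))
    (hωker : LinearMap.ker (ω : k →ₗ[ℂ] k) = ⊥)
    (hinv : ∀ t : ℝ,
      NormedSpace.exp ((-(Complex.I * t)) • K) * ω *
        NormedSpace.exp ((Complex.I * t) • K) = ω) :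
    ∃ (ι : Type) (b : HilbertBasis ι ℂ k), ∀ i, ∃ μ : ℝ, K (b i) = (μ : ℂ) • b i := by
  classical
  have hcomm : K * ω = ω * K := comm_of_invariant K ω hinv
  have hcomm' : ∀ x, K (ω x) = ω (K x) := by
    intro x
    have := congrArg (fun f : k →L[ℂ] k => f x) hcomm
    simpa [ContinuousLinearMap.mul_apply] using this
  have hsymm : LinearMap.IsSymmetric (ω : k →ₗ[ℂ] k) := hωpos.isSelfAdjoint.isSymmetric
  set Eig : ℂ → Submodule ℂ k := fun μ => Module.End.eigenspace (ω : k →ₗ[ℂ] k) μ with hEig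
  haveI hFD : ∀ μ : ℂ, FiniteDimensional ℂ (Eig μ) := by
    intro μ
    rcases eq_or_ne μ 0 with rfl | hμ
    · have h0 : Eig 0 = ⊥ := by
        rw [hEig]
        simp only [Module.End.eigenspace_zero]
        exact hωker
      exact h0 ▸ inferInstance
    · exact findim_eigenspace ω hωcompact μ hμ
  have hKinv : ∀ μ : ℂ, ∀ x ∈ Eig μ, (K : k →ₗ[ℂ] k) x ∈ Eig μ := by
    intro μ x hx
    rw [hEig] at hx ⊢
    rw [Module.End.mem_eigenspace_iff] at hx ⊢
    show ω (K x) = μ • K x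
    have hx' : ω x = μ • x := hx
    rw [← hcomm' x, hx', map_smul]
  have hKsym : ∀ μ : ℂ, LinearMap.IsSymmetric ((K : k →ₗ[ℂ] k).restrict (hKinv μ)) :=
    fun μ => (hK.isSymmetric).restrict_invariant (hKinv μ)
  set bas : ∀ μ : ℂ, OrthonormalBasis (Fin (Module.finrank ℂ (Eig μ))) ℂ (Eig μ) :=
    fun μ => (hKsym μ).eigenvectorBasis rfl with hbas
  set v : (Σ μ : ℂ, Fin (Module.finrank ℂ (Eig μ))) → k := fun p => ↑(bas p.1 p.2) with hv
  have hon : Orthonormal ℂ v := by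
    rw [orthonormal_iff_ite]
    rintro ⟨μ, i⟩ ⟨ν, j⟩
    rcases eq_or_ne μ ν with rfl | hμν
    · have h1 := (bas μ).orthonormal
      rw [orthonormal_iff_ite] at h1
      have h2 := h1 i j
      have h3 : (inner ℂ (v ⟨μ, i⟩) (v ⟨μ, j⟩) : ℂ) = inner ℂ (bas μ i) (bas μ j) := rfl
      rw [h3, h2]
      by_cases hij : i = j
      · simp [hij]
      · simp [hij, Sigma.mk.inj_iff]
    · have hfam := hsymm.orthogonalFamily_eigenspaces
      have h0 := hfam hμν (bas μ i) (bas ν j)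
      simp only [Submodule.coe_subtypeₗᵢ, Submodule.coe_subtype] at h0
      have h3 : (inner ℂ (v ⟨μ, i⟩) (v ⟨ν, j⟩) : ℂ) = 0 := h0
      rw [h3]
      simp [Sigma.mk.inj_iff, hμν]
  have hSbot : (⨆ μ : ℂ, Eig μ)ᗮ = ⊥ := by
    by_contra hne
    obtain ⟨x₀, hx₀mem, hx₀ne⟩ := Submodule.exists_mem_ne_zero_of_ne_bot hne
    have hn : (0:ℝ) < ‖x₀‖ := norm_pos_iff.mpr hx₀ne
    set z : k := ((‖x₀‖⁻¹ : ℝ) : ℂ) • x₀ with hz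
    have hzV : z ∈ (⨆ μ : ℂ, Eig μ)ᗮ := Submodule.smul_mem _ _ hx₀mem
    have hzn : ‖z‖ = 1 := by
      rw [hz, norm_smul, Complex.norm_real, Real.norm_eq_abs, abs_of_pos (by positivity)]
      rw [inv_mul_cancel₀ hn.ne']
    have hz0 : z ≠ 0 := by
      intro h
      rw [h, norm_zero] at hzn
      norm_num at hzn
    have hpos := aux_pos_inner ω hωpos hωker hz0
    obtain ⟨x, M, hxV, hxn, hM, hTx⟩ := exists_eigenvector ω hωpos hωcompact _
      (Submodule.isClosed_orthogonal _)
      (fun w hw => hsymm.orthogonalComplement_iSup_eigenspaces_invariant hw) hzV hzn hpos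
    have hxE : x ∈ Eig (M : ℂ) := by
      rw [hEig, Module.End.mem_eigenspace_iff]
      exact hTx
    have hxS : x ∈ ⨆ μ : ℂ, Eig μ := (le_iSup Eig (M : ℂ)) hxE
    have hx0 : x = 0 := by
      have h0 : (inner ℂ x x : ℂ) = 0 := (Submodule.mem_orthogonal _ x).mp hxV x hxS
      exact inner_self_eq_zero.mp h0
    rw [hx0, norm_zero] at hxn
    norm_num at hxn
  have hspan : (Submodule.span ℂ (Set.range v))ᗮ = ⊥ := by
    have hle : (⨆ μ : ℂ, Eig μ) ≤ Submodule.span ℂ (Set.range v) := by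
      refine iSup_le fun μ => ?_
      intro x hx
      have hmem : (⟨x, hx⟩ : Eig μ) ∈ Submodule.span ℂ (Set.range (bas μ)) := by
        have := Module.Basis.mem_span ((bas μ).toBasis) ⟨x, hx⟩
        simpa using this
      have hmap : x ∈ Submodule.map (Eig μ).subtype
          (Submodule.span ℂ (Set.range (bas μ))) :=
        ⟨⟨x, hx⟩, hmem, rfl⟩
      rw [Submodule.map_span] at hmap
      refine Submodule.span_mono ?_ hmap
      rintro _ ⟨_, ⟨i, rfl⟩, rfl⟩
      exact ⟨⟨μ, i⟩, rfl⟩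
    have h1 := Submodule.orthogonal_le hle
    rw [hSbot] at h1
    exact le_bot_iff.mp h1
  refine ⟨_, HilbertBasis.mkOfOrthogonalEqBot hon hspan, ?_⟩
  rintro ⟨μ, i⟩
  refine ⟨(hKsym μ).eigenvalues rfl i, ?_⟩
  rw [HilbertBasis.coe_mkOfOrthogonalEqBot]
  have happ := (hKsym μ).apply_eigenvectorBasis rfl i
  have hval := congrArg (Subtype.val) happ
  rw [LinearMap.restrict_coe_apply, Submodule.coe_smul] at hval
  exact hval
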